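/- Let λ ∈ ℂ*, b ∈ ℂ \ {1}, n ∈ ℕ, and let V be an infinite-dimensional irreducible Virasoro module on which each d_k acts locally finitely for k large. Then the action of the subalgebra V_+^{(n)} = span{d_i : i > n} on Ω(λ,b) ⊗ V is not locally finite: there exists a vector w such that the span of {d_{n+1}^k w : k ∈ ℕ} is infinite-dimensional. -/
import Mathlib


open Polynomial TensorProduct

/-- The Virasoro commutation relations for a family of operators `d i` (the action of the
basis vectors `d_i`) and a central operator `cc` (the action of the central element `c`) on a
complex vector space: `[d_i, d_j] = (j - i) d_{i+j} + δ_{i,-j} (i^3 - i)/12 c` and `c` central. -/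
def VirRep {V : Type*} [AddCommGroup V] [Module ℂ V]
    (d : ℤ → Module.End ℂ V) (cc : Module.End ℂ V) : Prop :=
  (∀ i : ℤ, cc * d i = d i * cc) ∧
    ∀ i j : ℤ, d i * d j - d j * d i =
      ((j : ℂ) - (i : ℂ)) • d (i + j) +
        (if i + j = 0 then ((i : ℂ) ^ 3 - (i : ℂ)) / 12 else 0) • cc

/-- A subspace invariant under the Virasoro action, i.e. a Virasoro submodule. -/
def VirInvariant {V : Type*} [AddCommGroup V] [Module ℂ V]
    (d : ℤ → Module.End ℂ V) (cc : Module.End ℂ V) (p : Submodule ℂ V) : Prop :=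
  (∀ i : ℤ, ∀ v ∈ p, d i v ∈ p) ∧ ∀ v ∈ p, cc v ∈ p

/-- The operator by which `d_n` acts on `Ω(λ, b) = ℂ[∂]`:
`f(∂) ↦ λ^n (∂ + n(b-1)) f(∂ - n)`. The central element acts by `0`. -/
noncomputable def omegaD (lam b : ℂ) (n : ℤ) : Module.End ℂ (Polynomial ℂ) where
  toFun f := lam ^ n • ((X + Polynomial.C ((n : ℂ) * (b - 1))) * f.comp (X - Polynomial.C (n : ℂ)))
  map_add' f g := by simp [add_comp, mul_add, smul_add]
  map_smul' a f := by
    simp only [RingHom.id_apply, smul_comp, mul_smul_comm]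
    rw [smul_comm]

/-- The diagonal action of `d_i` on a tensor product of two Virasoro modules. -/
noncomputable def tensorD {V W : Type*} [AddCommGroup V] [Module ℂ V] [AddCommGroup W]
    [Module ℂ W] (dV : ℤ → Module.End ℂ V) (dW : ℤ → Module.End ℂ W) (i : ℤ) :
    Module.End ℂ (V ⊗[ℂ] W) :=
  LinearMap.rTensor W (dV i) + LinearMap.lTensor V (dW i)

/-- The diagonal action of the central element on a tensor product of two Virasoro modules. -/
noncomputable def tensorC {V W : Type*} [AddCommGroup V] [Module ℂ V] [AddCommGroup W]
    [Module ℂ W] (cV : Module.End ℂ V) (cW : Module.End ℂ W) : Module.End ℂ (V ⊗[ℂ] W) :=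
  LinearMap.rTensor W cV + LinearMap.lTensor V cW

private lemma omegaD_apply (lam b : ℂ) (m : ℤ) (f : ℂ[X]) :
    omegaD lam b m f
      = lam ^ m • ((X + C ((m : ℂ) * (b - 1))) * f.comp (X - C (m : ℂ))) := rfl

private lemma omegaD_spec (lam b : ℂ) (hlam : lam ≠ 0) (m : ℤ) (f : ℂ[X]) (hf : f ≠ 0) :
    omegaD lam b m f ≠ 0 ∧ (omegaD lam b m f).natDegree = f.natDegree + 1 ∧
      (omegaD lam b m f).leadingCoeff = lam ^ m * f.leadingCoeff := by
  set g := f.comp (X - C ((m : ℂ))) with hg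
  have hlcg : g.leadingCoeff = f.leadingCoeff := by
    rw [hg, leadingCoeff_comp (by rw [natDegree_X_sub_C]; exact one_ne_zero),
      (monic_X_sub_C ((m : ℂ))).leadingCoeff, one_pow, mul_one]
  have hg0 : g ≠ 0 := by
    rw [← leadingCoeff_ne_zero, hlcg, leadingCoeff_ne_zero]; exact hf
  have hdg : g.natDegree = f.natDegree := by
    rw [hg, natDegree_comp, natDegree_X_sub_C, mul_one]
  have hX0 : (X + C ((m : ℂ) * (b - 1))) ≠ 0 := (monic_X_add_C _).ne_zero
  have hd1 : ((X + C ((m : ℂ) * (b - 1))) * g).natDegree = f.natDegree + 1 := by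
    rw [natDegree_mul hX0 hg0, natDegree_X_add_C, hdg, add_comm]
  have hl1 : ((X + C ((m : ℂ) * (b - 1))) * g).leadingCoeff = f.leadingCoeff := by
    rw [leadingCoeff_mul, (monic_X_add_C _).leadingCoeff, one_mul, hlcg]
  have ha : lam ^ m ≠ 0 := zpow_ne_zero _ hlam
  have key : omegaD lam b m f = C (lam ^ m) * ((X + C ((m : ℂ) * (b - 1))) * g) := by
    rw [omegaD_apply, smul_eq_C_mul]
  refine ⟨?_, ?_, ?_⟩
  · rw [key]; exact mul_ne_zero (by simpa using ha) (mul_ne_zero hX0 hg0)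
  · rw [key, natDegree_C_mul ha, hd1]
  · rw [key, leadingCoeff_mul, leadingCoeff_C, hl1]

private lemma not_fd_of_li {M : Type*} [AddCommGroup M] [Module ℂ M] {v : ℕ → M}
    (hv : LinearIndependent ℂ v)
    (h : FiniteDimensional ℂ (Submodule.span ℂ (Set.range v))) : False := by
  have hcard := (linearIndependent_span hv).lt_aleph0_of_finite
  simp [Cardinal.mk_nat] at hcard

private noncomputable def Nsub (V : Type*) [AddCommGroup V] [Module ℂ V] (k : ℕ) :
    Submodule ℂ (Polynomial ℂ ⊗[ℂ] V) :=
  LinearMap.range (LinearMap.rTensor V (Polynomial.degreeLT ℂ k).subtype)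

private lemma Nsub_tmul {V : Type*} [AddCommGroup V] [Module ℂ V] {k : ℕ} {f : ℂ[X]}
    (hf : f ∈ degreeLT ℂ k) (x : V) : f ⊗ₜ[ℂ] x ∈ Nsub V k :=
  ⟨(⟨f, hf⟩ : degreeLT ℂ k) ⊗ₜ[ℂ] x, by simp [LinearMap.rTensor_tmul]⟩

private lemma Nsub_rTensor {V : Type*} [AddCommGroup V] [Module ℂ V]
    (φ : ℂ[X] →ₗ[ℂ] ℂ[X]) {k l : ℕ} (h : ∀ f ∈ degreeLT ℂ k, φ f ∈ degreeLT ℂ l) :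
    ∀ t ∈ Nsub V k, LinearMap.rTensor V φ t ∈ Nsub V l := by
  rintro t ⟨s, rfl⟩
  rw [← LinearMap.rTensor_comp_apply]
  have hfac : φ ∘ₗ (degreeLT ℂ k).subtype
      = (degreeLT ℂ l).subtype ∘ₗ
        LinearMap.codRestrict (degreeLT ℂ l) (φ ∘ₗ (degreeLT ℂ k).subtype)
          (fun x => h x x.2) := rfl
  rw [hfac, LinearMap.rTensor_comp_apply]
  exact ⟨_, rfl⟩

private lemma Nsub_mono {V : Type*} [AddCommGroup V] [Module ℂ V] {k l : ℕ} (h : k ≤ l) :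
    Nsub V k ≤ Nsub V l := by
  intro t ht
  have := Nsub_rTensor (V := V) LinearMap.id
    (fun f hf => degreeLT_mono h hf) t ht
  simpa using this

private lemma Nsub_lTensor {V : Type*} [AddCommGroup V] [Module ℂ V]
    (B : Module.End ℂ V) {k : ℕ} : ∀ t ∈ Nsub V k, LinearMap.lTensor (ℂ[X]) B t ∈ Nsub V k := by
  rintro t ⟨s, rfl⟩
  rw [← LinearMap.comp_apply, LinearMap.lTensor_comp_rTensor,
    ← LinearMap.rTensor_comp_lTensor, LinearMap.comp_apply]
  exact ⟨_, rfl⟩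

private noncomputable def psi (V : Type*) [AddCommGroup V] [Module ℂ V] (k : ℕ) :
    Polynomial ℂ ⊗[ℂ] V →ₗ[ℂ] V :=
  (TensorProduct.lid ℂ V).toLinearMap ∘ₗ LinearMap.rTensor V (Polynomial.lcoeff ℂ k)

private lemma psi_tmul {V : Type*} [AddCommGroup V] [Module ℂ V] (k : ℕ) (f : ℂ[X]) (x : V) :
    psi V k (f ⊗ₜ[ℂ] x) = f.coeff k • x := by
  simp [psi, lcoeff_apply]

private lemma psi_zero_on {V : Type*} [AddCommGroup V] [Module ℂ V] (k : ℕ) :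
    ∀ t ∈ Nsub V k, psi V k t = 0 := by
  rintro t ⟨s, rfl⟩
  have h0 : (Polynomial.lcoeff ℂ k) ∘ₗ (degreeLT ℂ k).subtype = 0 := by
    apply LinearMap.ext
    intro x
    simp [lcoeff_apply, coeff_eq_zero_of_degree_lt (mem_degreeLT.mp x.2)]
  simp only [psi, LinearMap.comp_apply, ← LinearMap.rTensor_comp_apply, h0,
    LinearMap.rTensor_zero, LinearMap.zero_apply, map_zero]


set_option maxHeartbeats 1000000 in
/-- for an infinite-dimensional irreducible `V` on which each `d_k` with `k`
large acts locally finitely, the action of `V_+^{(n)}` on `Ω(λ,b) ⊗ V` is not locally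
finite: some vector `w` has infinite-dimensional span of `{d_{n+1}^k w : k ∈ ℕ}`. -/
theorem tensor_not_locally_finite {V : Type*} [AddCommGroup V] [Module ℂ V] [Nontrivial V]
    (lam b : ℂ) (hlam : lam ≠ 0) (hb : b ≠ 1)
    (d : ℤ → Module.End ℂ V) (cV : Module.End ℂ V) (hrep : VirRep d cV)
    (hirr : ∀ p : Submodule ℂ V, VirInvariant d cV p → p = ⊥ ∨ p = ⊤)
    (hinf : ¬ FiniteDimensional ℂ V)
    (hlf : ∃ R : ℤ, ∀ k : ℤ, R ≤ k → ∀ v : V,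
      FiniteDimensional ℂ (Submodule.span ℂ (Set.range fun m : ℕ => ((d k) ^ m) v)))
    (n : ℕ) (hn : 0 < n) :
    ∃ w : Polynomial ℂ ⊗[ℂ] V,
      ¬ FiniteDimensional ℂ (Submodule.span ℂ
        (Set.range fun k : ℕ => ((tensorD (omegaD lam b) d ((n : ℤ) + 1)) ^ k) w)) := by
  classical
  obtain ⟨v, hv⟩ := exists_ne (0 : V)
  set m : ℤ := (n : ℤ) + 1 with hm
  set A := omegaD lam b m with hA
  set B := d m with hB
  set D := tensorD (omegaD lam b) d m with hD
  set w := (1 : ℂ[X]) ⊗ₜ[ℂ] v with hw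
  refine ⟨w, fun hfd => ?_⟩
  have hDapp : ∀ t : ℂ[X] ⊗[ℂ] V,
      D t = LinearMap.rTensor V A t + LinearMap.lTensor (ℂ[X]) B t := by
    intro t
    rw [hD, hA, hB]
    simp only [tensorD, LinearMap.add_apply]
  have hDtmul : ∀ (f : ℂ[X]) (x : V), D (f ⊗ₜ[ℂ] x) = (A f) ⊗ₜ[ℂ] x + f ⊗ₜ[ℂ] (B x) := by
    intro f x
    rw [hDapp, LinearMap.rTensor_tmul, LinearMap.lTensor_tmul]
  -- powers of A on 1
  have hApow : ∀ k : ℕ, ((A ^ k) (1 : ℂ[X])) ≠ 0 ∧ ((A ^ k) (1 : ℂ[X])).natDegree = k ∧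
      ((A ^ k) (1 : ℂ[X])).leadingCoeff = (lam ^ m) ^ k := by
    intro k
    induction k with
    | zero => simp
    | succ k ih =>
      have hcalc : (A ^ (k + 1)) (1 : ℂ[X]) = A ((A ^ k) 1) := by
        rw [pow_succ', Module.End.mul_apply]
      have h := omegaD_spec lam b hlam m _ ih.1
      refine ⟨?_, ?_, ?_⟩ <;> rw [hcalc]
      · exact h.1
      · rw [h.2.1, ih.2.1]
      · rw [h.2.2, ih.2.2, pow_succ' (lam ^ m) k]
  have hAdeg : ∀ k : ℕ, ∀ f ∈ degreeLT ℂ k, A f ∈ degreeLT ℂ (k + 1) := by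
    intro k f hf
    rcases eq_or_ne f 0 with rfl | hf0
    · rw [map_zero]; exact (degreeLT ℂ (k + 1)).zero_mem
    · have h := omegaD_spec lam b hlam m f hf0
      rw [mem_degreeLT] at hf ⊢
      rw [degree_eq_natDegree h.1, h.2.1]
      have hlt : f.natDegree < k := (natDegree_lt_iff_degree_lt hf0).mpr hf
      exact_mod_cast Nat.add_lt_add_right hlt 1
  have hDN : ∀ k : ℕ, ∀ t ∈ Nsub V k, D t ∈ Nsub V (k + 1) := by
    intro k t ht
    rw [hDapp]
    exact add_mem (Nsub_rTensor A (hAdeg k) t ht)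
      (Nsub_mono (Nat.le_succ k) (Nsub_lTensor B t ht))
  have hinv : ∀ k : ℕ, (D ^ k) w - ((A ^ k) (1 : ℂ[X])) ⊗ₜ[ℂ] v ∈ Nsub V k := by
    intro k
    induction k with
    | zero => simpa [hw] using (Nsub V 0).zero_mem
    | succ k ih =>
      have e1 : (D ^ (k + 1)) w = D ((D ^ k) w) := by rw [pow_succ', Module.End.mul_apply]
      have e3 : D (((A ^ k) (1 : ℂ[X])) ⊗ₜ[ℂ] v)
          = ((A ^ (k + 1)) (1 : ℂ[X])) ⊗ₜ[ℂ] v + ((A ^ k) (1 : ℂ[X])) ⊗ₜ[ℂ] (B v) := by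
        rw [hDtmul]
        congr 2
        rw [pow_succ', Module.End.mul_apply]
      have e4 : (D ^ (k + 1)) w - ((A ^ (k + 1)) (1 : ℂ[X])) ⊗ₜ[ℂ] v
          = D ((D ^ k) w - ((A ^ k) (1 : ℂ[X])) ⊗ₜ[ℂ] v)
            + ((A ^ k) (1 : ℂ[X])) ⊗ₜ[ℂ] (B v) := by
        rw [e1, show (D ^ k) w = ((D ^ k) w - ((A ^ k) (1 : ℂ[X])) ⊗ₜ[ℂ] v)
            + ((A ^ k) (1 : ℂ[X])) ⊗ₜ[ℂ] v by abel, map_add, e3]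
        abel
      rw [e4]
      refine add_mem (hDN k _ ih) (Nsub_tmul ?_ _)
      rw [mem_degreeLT, degree_eq_natDegree (hApow k).1, (hApow k).2.1]
      exact_mod_cast Nat.lt_succ_self k
  set u : ℕ → ℂ[X] ⊗[ℂ] V := fun k => (D ^ k) w with hu
  have hmemN : ∀ j k : ℕ, j < k → u j ∈ Nsub V k := by
    intro j k hjk
    have h1 := Nsub_mono (le_of_lt hjk) (hinv j)
    have h2 : ((A ^ j) (1 : ℂ[X])) ⊗ₜ[ℂ] v ∈ Nsub V k := by
      refine Nsub_tmul ?_ _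
      rw [mem_degreeLT, degree_eq_natDegree (hApow j).1, (hApow j).2.1]
      exact_mod_cast hjk
    simpa [hu] using add_mem h1 h2
  have hpsi_eq : ∀ k : ℕ, psi V k (u k) = ((lam ^ m) ^ k) • v := by
    intro k
    have h1 : u k = ((A ^ k) (1 : ℂ[X])) ⊗ₜ[ℂ] v
        + ((D ^ k) w - ((A ^ k) (1 : ℂ[X])) ⊗ₜ[ℂ] v) := by rw [hu]; abel
    rw [h1, map_add, psi_zero_on k _ (hinv k), add_zero, psi_tmul]
    congr 1
    have hc : ((A ^ k) (1 : ℂ[X])).coeff k = ((A ^ k) (1 : ℂ[X])).leadingCoeff := by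
      rw [Polynomial.leadingCoeff, (hApow k).2.1]
    rw [hc, (hApow k).2.2]
  -- dual functional
  have hker : LinearMap.ker (LinearMap.toSpanSingleton ℂ V v) = ⊥ := by
    rw [LinearMap.ker_eq_bot']
    intro a ha
    rcases (smul_eq_zero.mp ha : a = 0 ∨ v = 0) with h | h
    · exact h
    · exact absurd h hv
  obtain ⟨ξ, hξ⟩ := (LinearMap.toSpanSingleton ℂ V v).exists_leftInverse_of_injective hker
  have hξv : ξ v = 1 := by
    have := LinearMap.congr_fun hξ 1
    simpa [LinearMap.toSpanSingleton_apply] using this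
  have key : ∀ N : ℕ, ∀ g : ℕ → ℂ,
      (∑ i ∈ Finset.range N, g i • u i) = 0 → ∀ i < N, g i = 0 := by
    intro N
    induction N with
    | zero => intro g _ i hi; omega
    | succ N ih =>
      intro g hg i hi
      have h0 : ∑ i ∈ Finset.range (N + 1), g i * ξ (psi V N (u i)) = 0 := by
        have := congrArg (fun t => ξ (psi V N t)) hg
        simpa [map_sum, map_smul, smul_eq_mul] using this
      rw [Finset.sum_range_succ, Finset.sum_eq_zero (fun j hj => by
        rw [psi_zero_on N _ (hmemN j N (Finset.mem_range.mp hj)), map_zero, mul_zero]),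
        zero_add, hpsi_eq N, map_smul, smul_eq_mul, hξv, mul_one] at h0
      have hpow : ((lam ^ m) ^ N : ℂ) ≠ 0 := pow_ne_zero _ (zpow_ne_zero _ hlam)
      have hgN : g N = 0 := by
        rcases mul_eq_zero.mp h0 with h | h
        · exact h
        · exact absurd h hpow
      rcases Nat.lt_succ_iff_lt_or_eq.mp hi with h | rfl
      · have hsum' : ∑ i ∈ Finset.range N, g i • u i = 0 := by
          rw [Finset.sum_range_succ, hgN, zero_smul, add_zero] at hg
          exact hg
        exact ih g hsum' i h
      · exact hgN
  have hli : LinearIndependent ℂ u := by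
    rw [linearIndependent_iff'']
    intro s g hgs hsum i
    by_cases his : i ∈ s
    · set N := s.sup id + 1 with hN
      have hsub : s ⊆ Finset.range N := fun j hj =>
        Finset.mem_range.mpr (Nat.lt_succ_of_le (Finset.le_sup (f := id) hj))
      have hsum' : ∑ j ∈ Finset.range N, g j • u j = 0 := by
        rw [← Finset.sum_subset hsub (fun j _ hj => by rw [hgs j hj, zero_smul])]
        exact hsum
      exact key N g hsum' i (Finset.mem_range.mp (hsub his))
    · exact hgs i his
  exact not_fd_of_li hli hfd
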